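/- arXiv:2405.01339 — 2 statements merged into one kernel-verified Lean document; each statement's English description precedes it below -/
import Mathlib

section
/- Let P ⊆ ℝ^d be a finite set that is β-stable for k-means. Let 1 ≤ γ ≤ 1 + β/2 and let {C_1,…,C_k} be a partition of P whose k-means cost with the cluster centroids a_1,…,a_k (a_j is the centroid of C_j) is at most γ·OPT_k. Then for any i, j ∈ [k] with i ≠ j, ‖a_i − a_j‖² ≥ β·OPT_k / (2·min(|C_i|, |C_j|)). -/
open Finset

noncomputable section

/-- `ℝ^d` as a Euclidean space. -/
abbrev Pt (d : ℕ) := EuclideanSpace ℝ (Fin d)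

/-- `cost(p,S) = min_{s ∈ S} ‖p - s‖²`. -/
noncomputable def pcost {d : ℕ} (p : Pt d) (S : Finset (Pt d)) : ℝ :=
  sInf ((fun s => ‖p - s‖ ^ 2) '' (S : Set (Pt d)))

/-- `cost(P,S) = ∑_{p ∈ P} min_{s ∈ S} ‖p - s‖²`. -/
noncomputable def scost {d : ℕ} (P S : Finset (Pt d)) : ℝ :=
  ∑ p ∈ P, pcost p S

/-- `OPT_j`: the optimal k-means cost of `P` with `j` centers. -/
noncomputable def kmOPT {d : ℕ} (P : Finset (Pt d)) (j : ℕ) : ℝ :=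
  sInf ((fun S : Finset (Pt d) => scost P S) '' {S : Finset (Pt d) | S.card = j})

lemma pcost_nonneg {d : ℕ} (p : Pt d) (S : Finset (Pt d)) : 0 ≤ pcost p S := by
  apply Real.sInf_nonneg
  rintro x ⟨s, -, rfl⟩
  positivity

lemma pcost_le {d : ℕ} (p : Pt d) {S : Finset (Pt d)} {s : Pt d} (hs : s ∈ S) :
    pcost p S ≤ ‖p - s‖ ^ 2 := by
  apply csInf_le
  · exact ⟨0, by rintro x ⟨t, -, rfl⟩; positivity⟩
  · exact ⟨s, Finset.mem_coe.mpr hs, rfl⟩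

lemma scost_nonneg {d : ℕ} (P S : Finset (Pt d)) : 0 ≤ scost P S :=
  Finset.sum_nonneg fun p _ => pcost_nonneg p S

lemma kmOPT_nonneg {d : ℕ} (P : Finset (Pt d)) (j : ℕ) : 0 ≤ kmOPT P j := by
  apply Real.sInf_nonneg
  rintro x ⟨S, -, rfl⟩
  exact scost_nonneg P S

lemma kmOPT_le {d : ℕ} (P : Finset (Pt d)) {S : Finset (Pt d)} {j : ℕ}
    (h : S.card = j) : kmOPT P j ≤ scost P S := by
  apply csInf_le
  · refine ⟨0, ?_⟩
    rintro x ⟨S', -, rfl⟩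
    exact scost_nonneg P S'
  · exact ⟨S, h, rfl⟩

lemma centroid_shift {d : ℕ} (C : Finset (Pt d)) (v : Pt d) :
    ∑ p ∈ C, ‖p - v‖ ^ 2
      = ∑ p ∈ C, ‖p - ((C.card : ℝ))⁻¹ • ∑ q ∈ C, q‖ ^ 2
        + (C.card : ℝ) * ‖(((C.card : ℝ))⁻¹ • ∑ q ∈ C, q) - v‖ ^ 2 := by
  rcases C.eq_empty_or_nonempty with rfl | hC
  · simp
  set a : Pt d := ((C.card : ℝ))⁻¹ • ∑ q ∈ C, q with ha
  have hcard : (C.card : ℝ) ≠ 0 := Nat.cast_ne_zero.mpr hC.card_ne_zero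
  have hsum : ∑ p ∈ C, (p - a) = 0 := by
    rw [Finset.sum_sub_distrib, Finset.sum_const, sub_eq_zero, ← Nat.cast_smul_eq_nsmul ℝ,
      ha, smul_inv_smul₀ hcard]
  have hinner : ∑ p ∈ C, (inner ℝ (p - a) (a - v) : ℝ) = 0 := by
    rw [← sum_inner, hsum, inner_zero_left]
  have hexp : ∀ p ∈ C, ‖p - v‖ ^ 2
      = ‖p - a‖ ^ 2 + 2 * (inner ℝ (p - a) (a - v) : ℝ) + ‖a - v‖ ^ 2 := by
    intro p _
    have h : p - v = (p - a) + (a - v) := by abel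
    rw [h, norm_add_sq_real]
  rw [Finset.sum_congr rfl hexp, Finset.sum_add_distrib, Finset.sum_add_distrib,
    ← Finset.mul_sum, hinner, Finset.sum_const, nsmul_eq_mul]
  ring

/-- Centers of a near-optimal clustering of a β-stable instance are pairwise
well separated (Lemma on approximate stability). -/
theorem stable_centers_separated
    {d : ℕ} (k : ℕ) (β γ : ℝ) (P : Finset (Pt d)) (cl : Pt d → Fin k)
    (hβ : 0 < β) (hγ1 : 1 ≤ γ) (hγ2 : γ ≤ 1 + β / 2)
    (hstable : kmOPT P k * (1 + β) ≤ kmOPT P (k - 1)) :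
    -- the clusters of the partition and their centroids
    let Cj : Fin k → Finset (Pt d) := fun j => P.filter fun p => cl p = j
    let a : Fin k → Pt d := fun j => (((Cj j).card : ℝ))⁻¹ • ∑ p ∈ Cj j, p
    -- the clustering is a γ-approximation
    (∑ j : Fin k, ∑ p ∈ Cj j, ‖p - a j‖ ^ 2) ≤ γ * kmOPT P k →
    ∀ i j : Fin k, i ≠ j →
      β * kmOPT P k / (2 * min ((Cj i).card : ℝ) ((Cj j).card : ℝ)) ≤ ‖a i - a j‖ ^ 2 := by
  classical
  intro Cj a happrox i j hij
  have hOPTk : 0 ≤ kmOPT P k := kmOPT_nonneg P k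
  have hD0 : 0 ≤ ‖a i - a j‖ ^ 2 := sq_nonneg _
  have hk2 : 2 ≤ k := by
    have : 1 < Fintype.card (Fin k) := Fintype.one_lt_card_iff_nontrivial.mpr ⟨⟨i, j, hij⟩⟩
    simp at this; omega
  by_cases hd : d = 0
  · subst hd
    have hsub : Subsingleton (Pt 0) := inferInstance
    have hopt0 : kmOPT P k = 0 := by
      have hempty : {S : Finset (Pt 0) | S.card = k} = ∅ := by
        ext S
        simp only [Set.mem_setOf_eq, Set.mem_empty_iff_false, iff_false]
        intro h
        have h1 : S.card ≤ 1 := Finset.card_le_one.mpr fun x _ y _ => Subsingleton.elim x y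
        omega
      rw [kmOPT, hempty, Set.image_empty, Real.sInf_empty]
    rw [hopt0]
    simpa using hD0
  · have hd1 : 0 < d := Nat.pos_of_ne_zero hd
    haveI : Infinite (Pt d) := by
      have hv : (EuclideanSpace.single (⟨0, hd1⟩ : Fin d) (1 : ℝ)) ≠ 0 := by
        intro h
        have := congrArg (fun x : Pt d => x ⟨0, hd1⟩) h
        simp [EuclideanSpace.single_apply] at this
      exact Infinite.of_injective (fun r : ℝ => r • EuclideanSpace.single (⟨0, hd1⟩ : Fin d) (1 : ℝ))
        (smul_left_injective ℝ hv)
    -- merging cluster i into cluster j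
    have hmerge : ∀ i' j' : Fin k, i' ≠ j' →
        kmOPT P (k - 1) ≤ γ * kmOPT P k + ((Cj i').card : ℝ) * ‖a i' - a j'‖ ^ 2 := by
      intro i' j' hij'
      set T : Finset (Pt d) := (Finset.univ.erase i').image a with hT
      have hTcard : T.card ≤ k - 1 := by
        refine le_trans Finset.card_image_le ?_
        rw [Finset.card_erase_of_mem (Finset.mem_univ i'), Finset.card_univ, Fintype.card_fin]
      obtain ⟨S, hTS, hScard⟩ := Infinite.exists_superset_card_eq T (k - 1) hTcard
      have haS : ∀ t : Fin k, t ≠ i' → a t ∈ S := fun t ht =>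
        hTS (Finset.mem_image_of_mem a (Finset.mem_erase.mpr ⟨ht, Finset.mem_univ t⟩))
      have hcost : scost P S
          ≤ (∑ t : Fin k, ∑ p ∈ Cj t, ‖p - a t‖ ^ 2)
            + ((Cj i').card : ℝ) * ‖a i' - a j'‖ ^ 2 := by
        have hsplit : scost P S = ∑ t : Fin k, ∑ p ∈ Cj t, pcost p S :=
          (Finset.sum_fiberwise P cl (fun p => pcost p S)).symm
        rw [hsplit]
        have step1 : ∑ t : Fin k, ∑ p ∈ Cj t, pcost p S
            ≤ ∑ t : Fin k, ∑ p ∈ Cj t, ‖p - (if t = i' then a j' else a t)‖ ^ 2 := by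
          refine Finset.sum_le_sum fun t _ => Finset.sum_le_sum fun p _ => ?_
          apply pcost_le
          split
          · exact haS j' (Ne.symm hij')
          · exact haS t ‹_›
        have step2 : ∀ t : Fin k, ∑ p ∈ Cj t, ‖p - (if t = i' then a j' else a t)‖ ^ 2
            = (∑ p ∈ Cj t, ‖p - a t‖ ^ 2)
              + (if t = i' then ((Cj i').card : ℝ) * ‖a i' - a j'‖ ^ 2 else 0) := by
          intro t
          by_cases ht : t = i'
          · subst ht
            simp only [if_pos rfl]
            exact centroid_shift (Cj t) (a j')
          · simp [ht]
        calc ∑ t : Fin k, ∑ p ∈ Cj t, pcost p S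
            ≤ ∑ t : Fin k, ∑ p ∈ Cj t, ‖p - (if t = i' then a j' else a t)‖ ^ 2 := step1
          _ = (∑ t : Fin k, ∑ p ∈ Cj t, ‖p - a t‖ ^ 2)
              + ((Cj i').card : ℝ) * ‖a i' - a j'‖ ^ 2 := by
            rw [Finset.sum_congr rfl fun t _ => step2 t, Finset.sum_add_distrib,
              Finset.sum_ite_eq' Finset.univ i']
            simp
      calc kmOPT P (k - 1) ≤ scost P S := kmOPT_le P hScard
        _ ≤ (∑ t : Fin k, ∑ p ∈ Cj t, ‖p - a t‖ ^ 2)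
            + ((Cj i').card : ℝ) * ‖a i' - a j'‖ ^ 2 := hcost
        _ ≤ γ * kmOPT P k + ((Cj i').card : ℝ) * ‖a i' - a j'‖ ^ 2 := by linarith
    have h1 := hmerge i j hij
    have h2 := hmerge j i hij.symm
    rw [norm_sub_rev] at h2
    set m : ℝ := min ((Cj i).card : ℝ) ((Cj j).card : ℝ) with hm
    have hmerge' : kmOPT P (k - 1) ≤ γ * kmOPT P k + m * ‖a i - a j‖ ^ 2 := by
      rcases min_cases ((Cj i).card : ℝ) ((Cj j).card : ℝ) with ⟨h, _⟩ | ⟨h, _⟩ <;>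
        rw [hm, h]
      · exact h1
      · exact h2
    have hmD : (β / 2) * kmOPT P k ≤ m * ‖a i - a j‖ ^ 2 := by
      have hg : γ * kmOPT P k ≤ (1 + β / 2) * kmOPT P k :=
        mul_le_mul_of_nonneg_right hγ2 hOPTk
      linarith
    have hm0 : (0 : ℝ) ≤ m := le_min (Nat.cast_nonneg _) (Nat.cast_nonneg _)
    rcases eq_or_lt_of_le hm0 with hm0' | hm0'
    · rw [← hm0']
      simpa using hD0
    · rw [div_le_iff₀ (by positivity)]
      nlinarith
end
end

section
/- There is an absolute constant C > 0 such that the following holds. Let P ⊂ ℝ^d be a finite set partitioned into clusters C_1,…,C_k with centers a_1,…,a_k (write A = {a_1,…,a_k} and cost(P,A) = ∑_j ∑_{p∈C_j} ‖p−a_j‖²). Let Ω ⊆ P have |Ω| ≤ m and non-negative weights (w_q)_{q∈Ω} satisfying, for each q ∈ Ω ∩ C_j: w_q ≤ 4k|C_j|/m and w_q·‖q−a_j‖² ≤ 4·cost(P,A)/m. Then for every finite set S of centers in ℝ^d, cost_Ω(P,S) ≤ C·k·(cost(P,S) + cost(P,A)). -/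
open Finset

noncomputable section

lemma pcost_tri {d : ℕ} (p b : Pt d) (S : Finset (Pt d)) :
    pcost p S ≤ 2 * ‖p - b‖ ^ 2 + 2 * pcost b S := by
  rcases S.eq_empty_or_nonempty with rfl | hS
  · have : pcost p (∅ : Finset (Pt d)) = 0 := by simp [pcost]
    rw [this]
    have : 0 ≤ pcost b (∅ : Finset (Pt d)) := pcost_nonneg _ _
    nlinarith [sq_nonneg ‖p - b‖]
  · obtain ⟨s, hs, hmin⟩ := S.exists_min_image (fun s => ‖b - s‖ ^ 2) hS
    have h1 : ‖b - s‖ ^ 2 ≤ pcost b S := by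
      refine le_csInf ⟨_, ⟨s, hs, rfl⟩⟩ ?_
      rintro x ⟨t, ht, rfl⟩
      exact hmin t ht
    have h2 : pcost p S ≤ ‖p - s‖ ^ 2 := pcost_le p hs
    have h3 : ‖p - s‖ ≤ ‖p - b‖ + ‖b - s‖ := norm_sub_le_norm_sub_add_norm_sub p b s
    have h4 : ‖p - s‖ ^ 2 ≤ (‖p - b‖ + ‖b - s‖) ^ 2 := pow_le_pow_left₀ (norm_nonneg _) h3 2
    nlinarith [sq_nonneg (‖p - b‖ - ‖b - s‖)]

/-- Worst-case bound on the cost of a weighted subset obeying the sensitivity weight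
bounds: `cost_Ω(P,S) ≤ C·k·(cost(P,S) + cost(P,A))`. -/
theorem worst_case_coreset_cost_bound :
    ∃ C : ℝ, 0 < C ∧
      ∀ (d k m : ℕ) (P : Finset (Pt d)) (cl : Pt d → Fin k) (a : Fin k → Pt d)
        (Ω : Finset (Pt d)) (w : Pt d → ℝ),
        Ω ⊆ P → (∀ q ∈ Ω, 0 ≤ w q) → Ω.card ≤ m →
        -- the sensitivity-sampling weight bounds
        (∀ q ∈ Ω,
          w q ≤ 4 * (k : ℝ) * (((P.filter fun p => cl p = cl q).card : ℝ)) / (m : ℝ) ∧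
          w q * ‖q - a (cl q)‖ ^ 2
            ≤ 4 * (∑ j : Fin k, ∑ p ∈ P.filter (fun p => cl p = j), ‖p - a j‖ ^ 2)
                / (m : ℝ)) →
        ∀ S : Finset (Pt d),
          (∑ q ∈ Ω, w q * pcost q S)
            ≤ C * (k : ℝ) *
                (scost P S
                  + ∑ j : Fin k, ∑ p ∈ P.filter (fun p => cl p = j), ‖p - a j‖ ^ 2) := by
  refine ⟨24, by norm_num, ?_⟩
  intro d k m P cl a Ω w hΩP hw hcard hbounds S
  set costA : ℝ := ∑ j : Fin k, ∑ p ∈ P.filter (fun p => cl p = j), ‖p - a j‖ ^ 2 with hcostA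
  set costS : ℝ := scost P S with hcostS
  have hA0 : 0 ≤ costA := by positivity
  have hS0 : 0 ≤ costS := Finset.sum_nonneg fun p _ => pcost_nonneg p S
  have hk1 : (1 : ℝ) ≤ (k : ℝ) := by
    have : Nonempty (Fin k) := ⟨cl 0⟩
    exact_mod_cast Nat.one_le_iff_ne_zero.mpr (fun h => by subst h; exact (Fin.elim0 (cl 0)))
  rcases Nat.eq_zero_or_pos m with rfl | hm
  · have : Ω = ∅ := Finset.card_eq_zero.mp (Nat.le_zero.mp hcard)
    subst this
    simp only [Finset.sum_empty]
    have : (0:ℝ) ≤ 24 * (k:ℝ) * (costS + costA) := by positivity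
    linarith
  have hM : (0 : ℝ) < (m : ℝ) := by exact_mod_cast hm
  -- per-point bound
  have key : ∀ q ∈ Ω, w q * pcost q S
      ≤ (8 * costA + 16 * (k:ℝ) * (costA + costS)) / (m:ℝ) := by
    intro q hq
    obtain ⟨hb1, hb2⟩ := hbounds q hq
    have hwq := hw q hq
    set j := cl q
    set Cj := P.filter (fun p => cl p = j) with hCj
    have hqCj : q ∈ Cj := Finset.mem_filter.mpr ⟨hΩP hq, rfl⟩
    have hcard1 : (1 : ℝ) ≤ (Cj.card : ℝ) := by
      exact_mod_cast Finset.card_pos.mpr ⟨q, hqCj⟩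
    have h1 : pcost q S ≤ 2 * ‖q - a j‖ ^ 2 + 2 * pcost (a j) S := pcost_tri q (a j) S
    have h2 : (Cj.card : ℝ) * pcost (a j) S ≤ ∑ p ∈ Cj, (2 * ‖p - a j‖ ^ 2 + 2 * pcost p S) := by
      rw [Finset.card_eq_sum_ones Cj]
      push_cast
      rw [Finset.sum_mul]
      apply Finset.sum_le_sum
      intro p hp
      have := pcost_tri (a j) p S
      rw [norm_sub_rev] at this
      linarith [this]
    have h3 : ∑ p ∈ Cj, ‖p - a j‖ ^ 2 ≤ costA := by
      rw [hcostA]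
      exact Finset.single_le_sum (f := fun i => ∑ p ∈ P.filter (fun p => cl p = i), ‖p - a i‖ ^ 2)
        (fun i _ => by positivity) (Finset.mem_univ j)
    have h4 : ∑ p ∈ Cj, pcost p S ≤ costS := by
      rw [hcostS, scost]
      exact Finset.sum_le_sum_of_subset_of_nonneg (Finset.filter_subset _ _)
        (fun p _ _ => pcost_nonneg p S)
    have h5 : ∑ p ∈ Cj, (2 * ‖p - a j‖ ^ 2 + 2 * pcost p S) ≤ 2 * costA + 2 * costS := by
      rw [Finset.sum_add_distrib, ← Finset.mul_sum, ← Finset.mul_sum]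
      linarith
    have h6 : (Cj.card : ℝ) * pcost (a j) S ≤ 2 * costA + 2 * costS := le_trans h2 h5
    have hp0 : 0 ≤ pcost (a j) S := pcost_nonneg _ _
    have hq0 : 0 ≤ pcost q S := pcost_nonneg _ _
    -- w q * pcost (a j) S ≤ (4k/M) * (2costA + 2costS)
    have h7 : w q * pcost (a j) S ≤ 4 * (k:ℝ) / (m:ℝ) * (2 * costA + 2 * costS) := by
      have := mul_le_mul_of_nonneg_right hb1 hp0
      have h8 : 4 * (k:ℝ) * (Cj.card : ℝ) / (m:ℝ) * pcost (a j) S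
          = 4 * (k:ℝ) / (m:ℝ) * ((Cj.card : ℝ) * pcost (a j) S) := by ring
      rw [h8] at this
      refine le_trans this ?_
      apply mul_le_mul_of_nonneg_left h6
      positivity
    have h9 : w q * pcost q S ≤ 2 * (w q * ‖q - a j‖ ^ 2) + 2 * (w q * pcost (a j) S) := by
      have := mul_le_mul_of_nonneg_left h1 hwq
      linarith [this]
    have h10 : 2 * (w q * ‖q - a j‖ ^ 2) ≤ 8 * costA / (m:ℝ) := by
      rw [show (8:ℝ) * costA / (m:ℝ) = 2 * (4 * costA / (m:ℝ)) by ring]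
      linarith
    calc w q * pcost q S ≤ 2 * (w q * ‖q - a j‖ ^ 2) + 2 * (w q * pcost (a j) S) := h9
      _ ≤ 8 * costA / (m:ℝ) + 2 * (4 * (k:ℝ) / (m:ℝ) * (2 * costA + 2 * costS)) := by linarith
      _ = (8 * costA + 16 * (k:ℝ) * (costA + costS)) / (m:ℝ) := by field_simp; ring
  have hsum : ∑ q ∈ Ω, w q * pcost q S
      ≤ (Ω.card : ℝ) * ((8 * costA + 16 * (k:ℝ) * (costA + costS)) / (m:ℝ)) := by
    calc ∑ q ∈ Ω, w q * pcost q S ≤ ∑ _q ∈ Ω, (8 * costA + 16 * (k:ℝ) * (costA + costS)) / (m:ℝ) :=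
        Finset.sum_le_sum key
      _ = (Ω.card : ℝ) * ((8 * costA + 16 * (k:ℝ) * (costA + costS)) / (m:ℝ)) := by
        rw [Finset.sum_const, nsmul_eq_mul]
  have hB0 : 0 ≤ (8 * costA + 16 * (k:ℝ) * (costA + costS)) / (m:ℝ) := by positivity
  have hcardm : (Ω.card : ℝ) ≤ (m : ℝ) := by exact_mod_cast hcard
  have hsum2 : ∑ q ∈ Ω, w q * pcost q S ≤ 8 * costA + 16 * (k:ℝ) * (costA + costS) := by
    calc ∑ q ∈ Ω, w q * pcost q S
        ≤ (Ω.card : ℝ) * ((8 * costA + 16 * (k:ℝ) * (costA + costS)) / (m:ℝ)) := hsum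
      _ ≤ (m:ℝ) * ((8 * costA + 16 * (k:ℝ) * (costA + costS)) / (m:ℝ)) :=
        mul_le_mul_of_nonneg_right hcardm hB0
      _ = 8 * costA + 16 * (k:ℝ) * (costA + costS) := by field_simp
  have : 8 * costA + 16 * (k:ℝ) * (costA + costS) ≤ 24 * (k:ℝ) * (costS + costA) := by nlinarith
  linarith
end
end
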